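/- In a fully packed loop configuration on the n×n grid with boundary conditions of type (A,B,C) (three bundles of a, b, c nested arches), exactly one of the three centers A, B, C has the property that its 45-degree cone contains the other two centers, and this distinguished center is never located at a corner of the grid. -/
import Mathlib


/-- The outer endpoint (stub) of the `k`-th external edge of the `n × n` grid, where the `4n`
external edges are enumerated counterclockwise: bottom side, right side, top side, left side.
The grid vertices occupy `[0,n) × [0,n)`. -/
def stub (n k : ℕ) : ℤ × ℤ :=
  if k < n then ((k : ℤ), -1)
  else if k < 2 * n then ((n : ℤ), (k : ℤ) - n)
  else if k < 3 * n then (3 * (n : ℤ) - 1 - k, (n : ℤ))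
  else (-1, 4 * (n : ℤ) - 1 - k)

/-- The inner endpoint (grid vertex) of the external edge with stub `P`. -/
def innerPt (n : ℕ) (P : ℤ × ℤ) : ℤ × ℤ :=
  (if P.1 = -1 then 0 else if P.1 = (n : ℤ) then (n : ℤ) - 1 else P.1,
   if P.2 = -1 then 0 else if P.2 = (n : ℤ) then (n : ℤ) - 1 else P.2)

/-- `Q` lies in the cone of the boundary point `P`: the region between the two diagonal rays
of slope `±1` emanating inward from the inner endpoint of `P` (the side on which `P` sits
determines the inward direction). -/
def InCone (n : ℕ) (P Q : ℤ × ℤ) : Prop :=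
  (P.2 = -1 ∧ (innerPt n Q).2 - (innerPt n P).2 ≥ |(innerPt n Q).1 - (innerPt n P).1|) ∨
  (P.2 = (n : ℤ) ∧ (innerPt n P).2 - (innerPt n Q).2 ≥ |(innerPt n Q).1 - (innerPt n P).1|) ∨
  (P.1 = -1 ∧ (innerPt n Q).1 - (innerPt n P).1 ≥ |(innerPt n Q).2 - (innerPt n P).2|) ∨
  (P.1 = (n : ℤ) ∧ (innerPt n P).1 - (innerPt n Q).1 ≥ |(innerPt n Q).2 - (innerPt n P).2|)

/-- The external edge with index `k` sits in a corner of the grid: it is the first or the last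
external edge on its side. -/
def IsCornerIdx (n k : ℕ) : Prop := k % n = 0 ∨ k % n = n - 1

/-- For an FPL of type `(A,B,C)` with three bundles of `a`, `b`, `c` nested arches
(`n = a+b+c`), the centers `A = stub n α`, `B = stub n β`, `C = stub n γ` are unoccupied
external edges at cyclic spacings `2(a+b)`, `2(b+c)`, `2(c+a)` along the perimeter.  Exactly
one of the three centers has the property that its cone contains the two others, and this
distinguished center is never in a corner. -/
lemma stub_bot (n k : ℕ) (h : k < n) : stub n k = ((k:ℤ), -1) := by
  unfold stub; rw [if_pos h]
lemma stub_right (n k : ℕ) (h1 : n ≤ k) (h2 : k < 2*n) : stub n k = ((n:ℤ), (k:ℤ) - n) := by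
  unfold stub; rw [if_neg (by omega), if_pos h2]
lemma stub_top (n k : ℕ) (h1 : 2*n ≤ k) (h2 : k < 3*n) :
    stub n k = (3*(n:ℤ) - 1 - k, (n:ℤ)) := by
  unfold stub; rw [if_neg (by omega), if_neg (by omega), if_pos h2]
lemma stub_left (n k : ℕ) (h1 : 3*n ≤ k) : stub n k = (-1, 4*(n:ℤ) - 1 - k) := by
  unfold stub; rw [if_neg (by omega), if_neg (by omega), if_neg (by omega)]

lemma inner_stub_bot (n m : ℕ) (h : m < n) : innerPt n (stub n m) = ((m:ℤ), 0) := by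
  rw [stub_bot n m h]; unfold innerPt; dsimp only
  rw [if_neg (by omega), if_neg (by omega), if_pos rfl]
lemma inner_stub_right (n m : ℕ) (h1 : n ≤ m) (h2 : m < 2*n) :
    innerPt n (stub n m) = ((n:ℤ) - 1, (m:ℤ) - n) := by
  rw [stub_right n m h1 h2]; unfold innerPt; dsimp only
  rw [if_neg (by omega), if_pos rfl, if_neg (by omega), if_neg (by omega)]
lemma inner_stub_top (n m : ℕ) (h1 : 2*n ≤ m) (h2 : m < 3*n) :
    innerPt n (stub n m) = (3*(n:ℤ) - 1 - m, (n:ℤ) - 1) := by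
  rw [stub_top n m h1 h2]; unfold innerPt; dsimp only
  rw [if_neg (by omega), if_neg (by omega), if_neg (by omega), if_pos rfl]
lemma inner_stub_left (n m : ℕ) (h1 : 3*n ≤ m) (h2 : m < 4*n) :
    innerPt n (stub n m) = (0, 4*(n:ℤ) - 1 - m) := by
  rw [stub_left n m h1]; unfold innerPt; dsimp only
  rw [if_pos rfl, if_neg (by omega), if_neg (by omega)]

lemma incone_bot (n r : ℕ) (hr : r < n) (Q : ℤ × ℤ) :
    InCone n (stub n r) Q ↔
      ((r:ℤ) - (innerPt n Q).2 ≤ (innerPt n Q).1 ∧ (innerPt n Q).1 ≤ (r:ℤ) + (innerPt n Q).2) := by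
  have hP : innerPt n (stub n r) = ((r:ℤ), 0) := inner_stub_bot n r hr
  rw [InCone, stub_bot n r hr, show innerPt n ((r:ℤ), -1) = ((r:ℤ), 0) from
    stub_bot n r hr ▸ hP]
  dsimp only
  constructor
  · rintro (⟨-, h⟩ | ⟨h, -⟩ | ⟨h, -⟩ | ⟨h, -⟩)
    · rw [ge_iff_le, abs_le] at h; omega
    · omega
    · omega
    · omega
  · intro h; left; refine ⟨rfl, ?_⟩; rw [ge_iff_le, abs_le]; omega

lemma incone_right (n r : ℕ) (hr : r < n) (Q : ℤ × ℤ) :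
    InCone n (stub n (n + r)) Q ↔
      ((innerPt n Q).2 ≤ (n:ℤ) - 1 - (innerPt n Q).1 + r ∧
        (r:ℤ) - ((n:ℤ) - 1 - (innerPt n Q).1) ≤ (innerPt n Q).2) := by
  have hP : innerPt n (stub n (n + r)) = ((n:ℤ) - 1, (r:ℤ)) := by
    have := inner_stub_right n (n + r) (by omega) (by omega)
    rw [this]; congr 1; push_cast; ring
  rw [InCone, stub_right n (n + r) (by omega) (by omega), show
    innerPt n ((n:ℤ), ((n:ℕ) + r : ℕ) - (n:ℤ)) = ((n:ℤ) - 1, (r:ℤ)) from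
    stub_right n (n + r) (by omega) (by omega) ▸ hP]
  dsimp only
  constructor
  · rintro (⟨h, -⟩ | ⟨h, -⟩ | ⟨h, -⟩ | ⟨-, h⟩)
    · omega
    · omega
    · omega
    · rw [ge_iff_le, abs_le] at h; omega
  · intro h
    right; right; right; refine ⟨rfl, ?_⟩; rw [ge_iff_le, abs_le]; omega

lemma incone_top (n r : ℕ) (hr : r < n) (Q : ℤ × ℤ) :
    InCone n (stub n (2*n + r)) Q ↔
      (((n:ℤ) - 1 - r) - ((n:ℤ) - 1 - (innerPt n Q).2) ≤ (innerPt n Q).1 ∧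
        (innerPt n Q).1 ≤ ((n:ℤ) - 1 - r) + ((n:ℤ) - 1 - (innerPt n Q).2)) := by
  have hP : innerPt n (stub n (2*n + r)) = ((n:ℤ) - 1 - r, (n:ℤ) - 1) := by
    have := inner_stub_top n (2*n + r) (by omega) (by omega)
    rw [this]; congr 1; push_cast; ring
  rw [InCone, stub_top n (2*n + r) (by omega) (by omega), show
    innerPt n (3*(n:ℤ) - 1 - ((2*n + r : ℕ) : ℤ), (n:ℤ)) = ((n:ℤ) - 1 - r, (n:ℤ) - 1) from
    stub_top n (2*n + r) (by omega) (by omega) ▸ hP]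
  dsimp only
  constructor
  · rintro (⟨h, -⟩ | ⟨-, h⟩ | ⟨h, -⟩ | ⟨h, -⟩)
    · omega
    · rw [ge_iff_le, abs_le] at h; omega
    · omega
    · omega
  · intro h
    right; left; refine ⟨rfl, ?_⟩; rw [ge_iff_le, abs_le]; omega

lemma incone_left (n r : ℕ) (hr : r < n) (Q : ℤ × ℤ) :
    InCone n (stub n (3*n + r)) Q ↔
      (((n:ℤ) - 1 - r) - (innerPt n Q).1 ≤ (innerPt n Q).2 ∧
        (innerPt n Q).2 ≤ ((n:ℤ) - 1 - r) + (innerPt n Q).1) := by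
  have hP : innerPt n (stub n (3*n + r)) = (0, (n:ℤ) - 1 - r) := by
    have := inner_stub_left n (3*n + r) (by omega) (by omega)
    rw [this]; congr 1; push_cast; ring
  rw [InCone, stub_left n (3*n + r) (by omega), show
    innerPt n (-1, 4*(n:ℤ) - 1 - ((3*n + r : ℕ) : ℤ)) = (0, (n:ℤ) - 1 - r) from
    stub_left n (3*n + r) (by omega) ▸ hP]
  dsimp only
  constructor
  · rintro (⟨h, -⟩ | ⟨h, -⟩ | ⟨-, h⟩ | ⟨h, -⟩)
    · omega
    · omega
    · rw [ge_iff_le, abs_le] at h; omega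
    · omega
  · intro h
    right; right; left; refine ⟨rfl, ?_⟩; rw [ge_iff_le, abs_le]; omega

lemma incone_iff (n m d r k : ℕ) (hn : 0 < n) (hr : r < n)
    (hk : k = r ∨ k = n + r ∨ k = 2*n + r ∨ k = 3*n + r)
    (hm : m < 4*n) (hd : m = k + d ∨ m + 4*n = k + d) (hd0 : 0 < d) (hd4 : d < 4*n) :
    InCone n (stub n k) (stub n m) ↔ (2*n ≤ d + 2*r + 1 ∧ d + 2*r + 1 ≤ 4*n) := by
  have hQ : m < n ∨ (n ≤ m ∧ m < 2*n) ∨ (2*n ≤ m ∧ m < 3*n) ∨ (3*n ≤ m ∧ m < 4*n) := by omega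
  rcases hk with hk | hk | hk | hk
  · rw [hk, incone_bot n r hr]
    rcases hQ with h | h | h | h
    · rw [inner_stub_bot n m h]; dsimp only; omega
    · rw [inner_stub_right n m h.1 h.2]; dsimp only; omega
    · rw [inner_stub_top n m h.1 h.2]; dsimp only; omega
    · rw [inner_stub_left n m h.1 h.2]; dsimp only; omega
  · rw [hk, incone_right n r hr]
    rcases hQ with h | h | h | h
    · rw [inner_stub_bot n m h]; dsimp only; omega
    · rw [inner_stub_right n m h.1 h.2]; dsimp only; omega
    · rw [inner_stub_top n m h.1 h.2]; dsimp only; omega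
    · rw [inner_stub_left n m h.1 h.2]; dsimp only; omega
  · rw [hk, incone_top n r hr]
    rcases hQ with h | h | h | h
    · rw [inner_stub_bot n m h]; dsimp only; omega
    · rw [inner_stub_right n m h.1 h.2]; dsimp only; omega
    · rw [inner_stub_top n m h.1 h.2]; dsimp only; omega
    · rw [inner_stub_left n m h.1 h.2]; dsimp only; omega
  · rw [hk, incone_left n r hr]
    rcases hQ with h | h | h | h
    · rw [inner_stub_bot n m h]; dsimp only; omega
    · rw [inner_stub_right n m h.1 h.2]; dsimp only; omega
    · rw [inner_stub_top n m h.1 h.2]; dsimp only; omega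
    · rw [inner_stub_left n m h.1 h.2]; dsimp only; omega


set_option maxHeartbeats 1000000 in
theorem exists_unique_cone_center (a b c n : ℕ) (hn : n = a + b + c)
    (ha : 0 < a) (hb : 0 < b) (hc : 0 < c)
    (α β γ : ℕ) (hα : α < 4 * n) (hβ : β < 4 * n) (hγ : γ < 4 * n)
    (hAB : β % (4 * n) = (α + 2 * (a + b)) % (4 * n))
    (hBC : γ % (4 * n) = (β + 2 * (b + c)) % (4 * n)) :
    (∃! k, k ∈ ({α, β, γ} : Set ℕ) ∧
        ∀ m ∈ ({α, β, γ} : Set ℕ), m ≠ k → InCone n (stub n k) (stub n m)) ∧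
      ∀ k, (k ∈ ({α, β, γ} : Set ℕ) ∧
          ∀ m ∈ ({α, β, γ} : Set ℕ), m ≠ k → InCone n (stub n k) (stub n m)) →
        ¬ IsCornerIdx n k := by
  have hn1 : 0 < n := by omega
  have E1 : 0 < 2*(a+b) := by omega
  have E2 : 2*(a+b) < 4*n := by omega
  have E3 : 0 < 2*n + 2*b := by omega
  have E4 : 2*n + 2*b < 4*n := by omega
  have E5 : 0 < 2*(b+c) := by omega
  have E6 : 2*(b+c) < 4*n := by omega
  have E7 : 0 < 2*n + 2*c := by omega
  have E8 : 2*n + 2*c < 4*n := by omega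
  have E9 : 0 < 2*(c+a) := by omega
  have E10 : 2*(c+a) < 4*n := by omega
  have E11 : 0 < 2*n + 2*a := by omega
  have E12 : 2*n + 2*a < 4*n := by omega
  have hβ' : β = (α + 2*(a+b)) % (4*n) := by rw [← Nat.mod_eq_of_lt hβ]; exact hAB
  have hγ' : γ = (β + 2*(b+c)) % (4*n) := by rw [← Nat.mod_eq_of_lt hγ]; exact hBC
  clear hAB hBC
  have hβc : β = α + 2*(a+b) ∨ β + 4*n = α + 2*(a+b) := by
    rcases Nat.lt_or_ge (α + 2*(a+b)) (4*n) with h | h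
    · left; rw [hβ', Nat.mod_eq_of_lt h]
    · right; rw [hβ', Nat.mod_eq_sub_mod h, Nat.mod_eq_of_lt (by omega)]; omega
  have hγc : γ = β + 2*(b+c) ∨ γ + 4*n = β + 2*(b+c) := by
    rcases Nat.lt_or_ge (β + 2*(b+c)) (4*n) with h | h
    · left; rw [hγ', Nat.mod_eq_of_lt h]
    · right; rw [hγ', Nat.mod_eq_sub_mod h, Nat.mod_eq_of_lt (by omega)]; omega
  clear hβ' hγ'
  have hγα : γ = α + (2*n + 2*b) ∨ γ + 4*n = α + (2*n + 2*b) := by omega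
  have hαβ2 : α = β + (2*n + 2*c) ∨ α + 4*n = β + (2*n + 2*c) := by omega
  have hβγ2 : β = γ + (2*n + 2*a) ∨ β + 4*n = γ + (2*n + 2*a) := by omega
  have hαγ2 : α = γ + 2*(c+a) ∨ α + 4*n = γ + 2*(c+a) := by omega
  have dαβ : α ≠ β := by omega
  have dβγ : β ≠ γ := by omega
  have dαγ : α ≠ γ := by omega
  -- the β, γ residues mod n in terms of the α residue
  have hβmod : β % n = (α % n + 2*(a+b)) % n := by
    rw [Nat.mod_add_mod]
    rcases hβc with h | h
    · rw [h]
    · conv_lhs => rw [show β = β % (4*n) from (Nat.mod_eq_of_lt hβ).symm,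
        show β % (4*n) = (β + 4*n) % (4*n) by rw [show β + 4*n = β + (4*n)*1 by ring,
          Nat.add_mul_mod_self_left], h]
      rw [show 4*n = n*4 by ring]
      exact Nat.mod_mod_of_dvd _ (dvd_mul_right n 4)
  have hγmod : γ % n = (β % n + 2*(b+c)) % n := by
    rw [Nat.mod_add_mod]
    rcases hγc with h | h
    · rw [h]
    · conv_lhs => rw [show γ = γ % (4*n) from (Nat.mod_eq_of_lt hγ).symm,
        show γ % (4*n) = (γ + 4*n) % (4*n) by rw [show γ + 4*n = γ + (4*n)*1 by ring,
          Nat.add_mul_mod_self_left], h]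
      rw [show 4*n = n*4 by ring]
      exact Nat.mod_mod_of_dvd _ (dvd_mul_right n 4)
  have hform : ∀ x t : ℕ, x < 3*n → (x % n = t →
      (t = x ∨ t + n = x ∨ t + 2*n = x)) := by
    intro x t hx ht
    rcases Nat.lt_or_ge x n with h1 | h1
    · left; rw [← ht, Nat.mod_eq_of_lt h1]
    · rcases Nat.lt_or_ge x (2*n) with h2 | h2
      · right; left
        rw [← ht, Nat.mod_eq_sub_mod h1, Nat.mod_eq_of_lt (by omega)]; omega
      · right; right
        rw [← ht, Nat.mod_eq_sub_mod h1, Nat.mod_eq_sub_mod (by omega),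
          Nat.mod_eq_of_lt (by omega)]; omega
  have hform4 : ∀ x : ℕ, x < 4*n →
      (x = x % n ∨ x = n + x % n ∨ x = 2*n + x % n ∨ x = 3*n + x % n) := by
    intro x hx
    rcases Nat.lt_or_ge x n with h1 | h1
    · left; rw [Nat.mod_eq_of_lt h1]
    · rcases Nat.lt_or_ge x (2*n) with h2 | h2
      · right; left; rw [Nat.mod_eq_sub_mod h1, Nat.mod_eq_of_lt (by omega)]; omega
      · rcases Nat.lt_or_ge x (3*n) with h3 | h3
        · right; right; left
          rw [Nat.mod_eq_sub_mod h1, Nat.mod_eq_sub_mod (by omega),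
            Nat.mod_eq_of_lt (by omega)]; omega
        · right; right; right
          rw [Nat.mod_eq_sub_mod h1, Nat.mod_eq_sub_mod (by omega),
            Nat.mod_eq_sub_mod (by omega), Nat.mod_eq_of_lt (by omega)]; omega
  have hrα : α % n < n := Nat.mod_lt _ hn1
  have hrβ : β % n < n := Nat.mod_lt _ hn1
  have hrγ : γ % n < n := Nat.mod_lt _ hn1
  have hαf := hform4 α hα
  have hβf := hform4 β hβ
  have hγf := hform4 γ hγ
  have hcornA : IsCornerIdx n α ↔ (α % n = 0 ∨ α % n = n - 1) := Iff.rfl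
  have hcornB : IsCornerIdx n β ↔ (β % n = 0 ∨ β % n = n - 1) := Iff.rfl
  have hcornC : IsCornerIdx n γ ↔ (γ % n = 0 ∨ γ % n = n - 1) := Iff.rfl
  have hr1 := hform (α % n + 2*(a+b)) (β % n) (by omega) hβmod.symm
  have hr2 := hform (β % n + 2*(b+c)) (γ % n) (by omega) hγmod.symm
  clear hβmod hγmod hform hform4
  obtain ⟨ra, hra⟩ : ∃ r, α % n = r := ⟨_, rfl⟩
  obtain ⟨rb, hrb⟩ : ∃ r, β % n = r := ⟨_, rfl⟩
  obtain ⟨rg, hrg⟩ : ∃ r, γ % n = r := ⟨_, rfl⟩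
  rw [hra] at hrα hαf hcornA hr1
  rw [hrb] at hrβ hβf hcornB hr1 hr2
  rw [hrg] at hrγ hγf hcornC hr2
  clear hra hrb hrg
  have Iαβ := incone_iff n β (2*(a+b)) ra α hn1 hrα hαf hβ hβc E1 E2
  have Iαγ := incone_iff n γ (2*n + 2*b) ra α hn1 hrα hαf hγ hγα E3 E4
  have Iβγ := incone_iff n γ (2*(b+c)) rb β hn1 hrβ hβf hγ hγc E5 E6
  have Iβα := incone_iff n α (2*n + 2*c) rb β hn1 hrβ hβf hα hαβ2 E7 E8
  have Iγα := incone_iff n α (2*(c+a)) rg γ hn1 hrγ hγf hα hαγ2 E9 E10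
  have Iγβ := incone_iff n β (2*n + 2*a) rg γ hn1 hrγ hγf hβ hβγ2 E11 E12
  clear hαf hβf hγf hβc hγc hγα hαβ2 hβγ2 hαγ2 E1 E2 E3 E4 E5 E6 E7 E8 E9 E10 E11 E12
  have key :
      ((c ≤ ra ∧ ra + b + 1 ≤ n) ∧ ¬(a ≤ rb ∧ rb + c + 1 ≤ n) ∧
        ¬(b ≤ rg ∧ rg + a + 1 ≤ n)) ∨
      (¬(c ≤ ra ∧ ra + b + 1 ≤ n) ∧ (a ≤ rb ∧ rb + c + 1 ≤ n) ∧
        ¬(b ≤ rg ∧ rg + a + 1 ≤ n)) ∨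
      (¬(c ≤ ra ∧ ra + b + 1 ≤ n) ∧ ¬(a ≤ rb ∧ rb + c + 1 ≤ n) ∧
        (b ≤ rg ∧ rg + a + 1 ≤ n)) := by
    clear Iαβ Iαγ Iβγ Iβα Iγα Iγβ hcornA hcornB hcornC
    omega
  have CA : (∀ m ∈ ({α, β, γ} : Set ℕ), m ≠ α → InCone n (stub n α) (stub n m)) ↔
      (c ≤ ra ∧ ra + b + 1 ≤ n) := by
    constructor
    · intro h
      have h1 := h β (by simp) (Ne.symm dαβ)
      have h2 := h γ (by simp) (Ne.symm dαγ)
      rw [Iαβ] at h1; rw [Iαγ] at h2; omega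
    · intro h m hm hne
      simp only [Set.mem_insert_iff, Set.mem_singleton_iff] at hm
      rcases hm with rfl | rfl | rfl
      · exact absurd rfl hne
      · rw [Iαβ]; omega
      · rw [Iαγ]; omega
  have CB : (∀ m ∈ ({α, β, γ} : Set ℕ), m ≠ β → InCone n (stub n β) (stub n m)) ↔
      (a ≤ rb ∧ rb + c + 1 ≤ n) := by
    constructor
    · intro h
      have h1 := h α (by simp) dαβ
      have h2 := h γ (by simp) (Ne.symm dβγ)
      rw [Iβα] at h1; rw [Iβγ] at h2; omega
    · intro h m hm hne
      simp only [Set.mem_insert_iff, Set.mem_singleton_iff] at hm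
      rcases hm with rfl | rfl | rfl
      · rw [Iβα]; omega
      · exact absurd rfl hne
      · rw [Iβγ]; omega
  have CC : (∀ m ∈ ({α, β, γ} : Set ℕ), m ≠ γ → InCone n (stub n γ) (stub n m)) ↔
      (b ≤ rg ∧ rg + a + 1 ≤ n) := by
    constructor
    · intro h
      have h1 := h α (by simp) dαγ
      have h2 := h β (by simp) dβγ
      rw [Iγα] at h1; rw [Iγβ] at h2; omega
    · intro h m hm hne
      simp only [Set.mem_insert_iff, Set.mem_singleton_iff] at hm
      rcases hm with rfl | rfl | rfl
      · rw [Iγα]; omega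
      · rw [Iγβ]; omega
      · exact absurd rfl hne
  constructor
  · rcases key with ⟨h1, h2, h3⟩ | ⟨h1, h2, h3⟩ | ⟨h1, h2, h3⟩
    · refine ⟨α, ⟨by simp, CA.mpr h1⟩, ?_⟩
      rintro k ⟨hk, hcone⟩
      simp only [Set.mem_insert_iff, Set.mem_singleton_iff] at hk
      rcases hk with rfl | rfl | rfl
      · rfl
      · exact absurd (CB.mp hcone) h2
      · exact absurd (CC.mp hcone) h3
    · refine ⟨β, ⟨by simp, CB.mpr h2⟩, ?_⟩
      rintro k ⟨hk, hcone⟩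
      simp only [Set.mem_insert_iff, Set.mem_singleton_iff] at hk
      rcases hk with rfl | rfl | rfl
      · exact absurd (CA.mp hcone) h1
      · rfl
      · exact absurd (CC.mp hcone) h3
    · refine ⟨γ, ⟨by simp, CC.mpr h3⟩, ?_⟩
      rintro k ⟨hk, hcone⟩
      simp only [Set.mem_insert_iff, Set.mem_singleton_iff] at hk
      rcases hk with rfl | rfl | rfl
      · exact absurd (CA.mp hcone) h1
      · exact absurd (CB.mp hcone) h2
      · rfl
  · rintro k ⟨hk, hcone⟩ hcorner
    simp only [Set.mem_insert_iff, Set.mem_singleton_iff] at hk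
    rcases hk with rfl | rfl | rfl
    · have h1 := hcornA.mp hcorner
      have h2 := CA.mp hcone
      omega
    · have h1 := hcornB.mp hcorner
      have h2 := CB.mp hcone
      omega
    · have h1 := hcornC.mp hcorner
      have h2 := CC.mp hcone
      omega
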